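/- Let $y>0$ and $d>\sqrt y$. At $z=\theta(d)=1+d+y+y/d$, with $m_1(z)=-1/(d+y)$ and $m_2(z)=-1/(d+1)$ the branches of the MP and companion MP Stieltjes transforms, and derivatives computed by implicit differentiation of their self-consistent equations, one has $\big(z m_2(z) m_1(z)^2\big)' = \frac{2d+y}{(d+y)^2(d^2-y)}$, where $'$ denotes $d/dz$ evaluated at $z=\theta(d)$. -/

import Mathlib

private lemma zm2m1sq_deriv_aux (d y : ℂ) (h1 : d ≠ 0) (h2 : d + y ≠ 0)
    (h3 : d + 1 ≠ 0) (h4 : d ^ 2 - y ≠ 0) :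
    (1 * (-(1/(d+1))) + (1+d+y+y/d) * (d^2/((d+1)^2*(d^2-y)))) * (-(1/(d+y)))^2
      + (1+d+y+y/d)*(-(1/(d+1))) * (((2:ℕ):ℂ) * (-(1/(d+y)))^(2-1) * (d^2/((d+y)^2*(d^2-y))))
      = (2*d+y)/((d+y)^2*(d^2-y)) := by
  have hA : 1 * (-(1/(d+1))) + (1+d+y+y/d) * (d^2/((d+1)^2*(d^2-y))) = y/(d^2-y) := by
    field_simp
    ring
  have hB : (-(1/(d+y)))^2 = 1/(d+y)^2 := by
    rw [neg_pow, div_pow]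
    norm_num
  have hCD : (1+d+y+y/d)*(-(1/(d+1))) * (((2:ℕ):ℂ) * (-(1/(d+y)))^(2-1) * (d^2/((d+y)^2*(d^2-y))))
      = 2*d/((d+y)^2*(d^2-y)) := by
    norm_num
    field_simp
    ring
  rw [hA, hB, hCD, div_mul_div_comm,
    div_add_div _ _ (mul_ne_zero h4 (pow_ne_zero 2 h2)) (mul_ne_zero (pow_ne_zero 2 h2) h4),
    div_eq_div_iff (mul_ne_zero (mul_ne_zero h4 (pow_ne_zero 2 h2)) (mul_ne_zero (pow_ne_zero 2 h2) h4)) (mul_ne_zero (pow_ne_zero 2 h2) h4)]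
  ring

/-- Let `y > 0`, `d > √y`, and `θd = θ(d) = 1 + d + y + y/d`. If `m₁, m₂ : ℂ → ℂ` satisfy
the MP and companion self-consistent equations near `θd`, are differentiable at `θd`, with
`m₁(θd) = -1/(d+y)` and `m₂(θd) = -1/(d+1)`, then
`(z m₂(z) m₁(z)²)'|_{z=θd} = (2d + y) / ((d+y)² (d² - y))`. -/
theorem zm2m1sq_deriv (y d : ℝ) (hy : 0 < y) (hd : Real.sqrt y < d)
    (θd : ℂ) (hθ : θd = 1 + (d : ℂ) + (y : ℂ) + (y : ℂ) / (d : ℂ))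
    (m1 m2 : ℂ → ℂ)
    (hval1 : m1 θd = -(1 / ((d : ℂ) + (y : ℂ))))
    (hval2 : m2 θd = -(1 / ((d : ℂ) + 1)))
    (heq1 : ∀ᶠ z in nhds θd,
      z * (y : ℂ) * (m1 z) ^ 2 + (z - (1 - (y : ℂ))) * m1 z + 1 = 0)
    (heq2 : ∀ᶠ z in nhds θd,
      z * (m2 z) ^ 2 + (z + (1 - (y : ℂ))) * m2 z + 1 = 0)
    (hdiff1 : DifferentiableAt ℂ m1 θd) (hdiff2 : DifferentiableAt ℂ m2 θd) :
    deriv (fun z => z * m2 z * (m1 z) ^ 2) θd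
      = (2 * (d : ℂ) + (y : ℂ)) / ((((d : ℂ) + (y : ℂ)) ^ 2) * ((d : ℂ) ^ 2 - (y : ℂ))) := by
  have hd0 : (0:ℝ) < d := lt_of_le_of_lt (Real.sqrt_nonneg y) hd
  have hd2 : y < d ^ 2 := by nlinarith [Real.sq_sqrt hy.le, Real.sqrt_nonneg y]
  have hcd : (d:ℂ) ≠ 0 := by exact_mod_cast hd0.ne'
  have hdy : (d:ℂ) + (y:ℂ) ≠ 0 := by
    have : ((d+y:ℝ):ℂ) ≠ 0 := Complex.ofReal_ne_zero.2 (by positivity)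
    simpa using this
  have hd1 : (d:ℂ) + 1 ≠ 0 := by
    have : ((d+1:ℝ):ℂ) ≠ 0 := Complex.ofReal_ne_zero.2 (by positivity)
    simpa using this
  have hdsq : (d:ℂ) ^ 2 - (y:ℂ) ≠ 0 := by
    have : ((d^2-y:ℝ):ℂ) ≠ 0 := Complex.ofReal_ne_zero.2 (by nlinarith)
    simpa using this
  have h1 := hdiff1.hasDerivAt
  have h2 := hdiff2.hasDerivAt
  have H1 := ((((hasDerivAt_id θd).mul_const (y:ℂ)).mul (h1.pow 2)).add
      (((hasDerivAt_id θd).sub_const ((1:ℂ)-(y:ℂ))).mul h1)).add_const (1:ℂ)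
  simp only [id_eq] at H1
  norm_num at H1
  have E1 : (y:ℂ) * m1 θd ^ 2 + θd * (y:ℂ) * (2 * m1 θd * deriv m1 θd)
      + (m1 θd + (θd - (1 - (y:ℂ))) * deriv m1 θd) = 0 := by
    have hz : deriv (fun z => z * (y:ℂ) * (m1 z) ^ 2 + (z - (1 - (y:ℂ))) * m1 z + 1) θd
        = deriv (fun _ : ℂ => (0:ℂ)) θd := Filter.EventuallyEq.deriv_eq heq1
    rw [(H1.add_const (1:ℂ)).deriv] at hz
    simpa using hz
  have H2 := (((hasDerivAt_id θd).mul (h2.pow 2)).add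
      (((hasDerivAt_id θd).add_const ((1:ℂ)-(y:ℂ))).mul h2)).add_const (1:ℂ)
  simp only [id_eq] at H2
  norm_num at H2
  have E2 : m2 θd ^ 2 + θd * (2 * m2 θd * deriv m2 θd)
      + (m2 θd + (θd + (1 - (y:ℂ))) * deriv m2 θd) = 0 := by
    have hz : deriv (fun z => z * (m2 z) ^ 2 + (z + (1 - (y:ℂ))) * m2 z + 1) θd
        = deriv (fun _ : ℂ => (0:ℂ)) θd := Filter.EventuallyEq.deriv_eq heq2
    rw [(H2.add_const (1:ℂ)).deriv] at hz
    simpa using hz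
  have hm1' : deriv m1 θd = (d:ℂ)^2 / (((d:ℂ)+(y:ℂ))^2 * ((d:ℂ)^2 - (y:ℂ))) := by
    rw [hval1] at E1
    generalize ha' : deriv m1 θd = a' at E1 ⊢
    rw [hθ] at E1
    field_simp at E1
    rw [eq_div_iff (by exact mul_ne_zero (pow_ne_zero 2 hdy) hdsq)]
    apply mul_left_cancel₀ (mul_ne_zero hcd (pow_ne_zero 2 hdy))
    linear_combination (d:ℂ) * ((d:ℂ)+(y:ℂ))^2 * E1
  have hm2' : deriv m2 θd = (d:ℂ)^2 / (((d:ℂ)+1)^2 * ((d:ℂ)^2 - (y:ℂ))) := by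
    rw [hval2] at E2
    generalize hb' : deriv m2 θd = b' at E2 ⊢
    rw [hθ] at E2
    field_simp at E2
    rw [eq_div_iff (by exact mul_ne_zero (pow_ne_zero 2 hd1) hdsq)]
    apply mul_left_cancel₀ (mul_ne_zero hcd (pow_ne_zero 2 hd1))
    linear_combination (d:ℂ) * ((d:ℂ)+1)^2 * E2
  have HT := ((hasDerivAt_id θd).mul h2).mul (h1.pow 2)
  simp only [id_eq, Pi.mul_apply, Pi.pow_apply] at HT
  rw [show (fun z => z * m2 z * (m1 z) ^ 2) = id * m2 * m1 ^ 2 from rfl, HT.deriv]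
  rw [hval1, hval2, hm1', hm2', hθ]
  exact zm2m1sq_deriv_aux (d:ℂ) (y:ℂ) hcd hdy hd1 hdsq
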